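/- Let φ, ψ : [0,1] → [0,1] be twice continuously differentiable functions with Dφ(x) > 0 and Dψ(x) > 0 for all x ∈ [0,1], and with φ(0) = ψ(0) = 0 and φ(1) = ψ(1) = 1. If Nφ(x) = Nψ(x) for all x ∈ [0,1], then φ = ψ. In particular the nonlinearity operator N is injective on orientation-preserving C² diffeomorphisms of [0,1] fixing the endpoints. -/

import Mathlib

open Set

/-- The nonlinearity operator is injective: two orientation-preserving C² diffeomorphisms
of `[0,1]` fixing the endpoints with the same nonlinearity `D²φ/Dφ` coincide. -/
theorem nonlinearity_operator_injective
    (φ ψ φ' φ'' ψ' ψ'' : ℝ → ℝ)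
    (hφmaps : Set.MapsTo φ (Set.Icc 0 1) (Set.Icc 0 1))
    (hψmaps : Set.MapsTo ψ (Set.Icc 0 1) (Set.Icc 0 1))
    (hφ1 : ∀ x ∈ Set.Icc (0:ℝ) 1, HasDerivWithinAt φ (φ' x) (Set.Icc 0 1) x)
    (hφ2 : ∀ x ∈ Set.Icc (0:ℝ) 1, HasDerivWithinAt φ' (φ'' x) (Set.Icc 0 1) x)
    (hφ''c : ContinuousOn φ'' (Set.Icc 0 1))
    (hφpos : ∀ x ∈ Set.Icc (0:ℝ) 1, 0 < φ' x)
    (hψ1 : ∀ x ∈ Set.Icc (0:ℝ) 1, HasDerivWithinAt ψ (ψ' x) (Set.Icc 0 1) x)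
    (hψ2 : ∀ x ∈ Set.Icc (0:ℝ) 1, HasDerivWithinAt ψ' (ψ'' x) (Set.Icc 0 1) x)
    (hψ''c : ContinuousOn ψ'' (Set.Icc 0 1))
    (hψpos : ∀ x ∈ Set.Icc (0:ℝ) 1, 0 < ψ' x)
    (hφ0 : φ 0 = 0) (hφ1e : φ 1 = 1) (hψ0 : ψ 0 = 0) (hψ1e : ψ 1 = 1)
    (hN : ∀ x ∈ Set.Icc (0:ℝ) 1, φ'' x / φ' x = ψ'' x / ψ' x) :
    Set.EqOn φ ψ (Set.Icc 0 1) := by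
  have h01 : (0:ℝ) ∈ Set.Icc (0:ℝ) 1 := by constructor <;> norm_num
  have h11 : (1:ℝ) ∈ Set.Icc (0:ℝ) 1 := by constructor <;> norm_num
  have hconv : Convex ℝ (Set.Icc (0:ℝ) 1) := convex_Icc 0 1
  -- step 1: φ'/ψ' is constant
  have hf : ∀ x ∈ Set.Icc (0:ℝ) 1,
      HasDerivWithinAt (fun y => φ' y / ψ' y) 0 (Set.Icc 0 1) x := by
    intro x hx
    have h := (hφ2 x hx).div (hψ2 x hx) (ne_of_gt (hψpos x hx))
    have hc : φ'' x * ψ' x = ψ'' x * φ' x := by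
      have := hN x hx
      field_simp [ne_of_gt (hφpos x hx), ne_of_gt (hψpos x hx)] at this
      linarith
    exact h.congr_deriv (by rw [hc]; ring)
  have hfc : ∀ x ∈ Set.Icc (0:ℝ) 1, φ' x / ψ' x = φ' 0 / ψ' 0 := by
    intro x hx
    have := hconv.norm_image_sub_le_of_norm_hasDerivWithin_le (C := 0) hf
      (fun y hy => by simp) h01 hx
    have : ‖φ' x / ψ' x - φ' 0 / ψ' 0‖ ≤ 0 := by simpa using this
    have := le_antisymm this (norm_nonneg _)
    rw [norm_eq_zero, sub_eq_zero] at this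
    exact this
  set c := φ' 0 / ψ' 0 with hc
  have hderiv : ∀ x ∈ Set.Icc (0:ℝ) 1, φ' x = c * ψ' x := by
    intro x hx
    have := hfc x hx
    field_simp [ne_of_gt (hψpos x hx)] at this
    linarith [this]
  -- step 2: φ - c ψ is constant
  have hg : ∀ x ∈ Set.Icc (0:ℝ) 1,
      HasDerivWithinAt (fun y => φ y - c * ψ y) 0 (Set.Icc 0 1) x := by
    intro x hx
    have h := (hφ1 x hx).sub ((hψ1 x hx).const_mul c)
    exact h.congr_deriv (by rw [hderiv x hx]; ring)
  have hgc : ∀ x ∈ Set.Icc (0:ℝ) 1, φ x - c * ψ x = φ 0 - c * ψ 0 := by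
    intro x hx
    have := hconv.norm_image_sub_le_of_norm_hasDerivWithin_le (C := 0) hg
      (fun y hy => by simp) h01 hx
    have : ‖(φ x - c * ψ x) - (φ 0 - c * ψ 0)‖ ≤ 0 := by simpa using this
    have := le_antisymm this (norm_nonneg _)
    rw [norm_eq_zero, sub_eq_zero] at this
    exact this
  have hc1 : c = 1 := by
    have := hgc 1 h11
    rw [hφ1e, hψ1e, hφ0, hψ0] at this
    linarith
  intro x hx
  have := hgc x hx
  rw [hc1, hφ0, hψ0] at this
  linarith
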